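/- For nonnegative integers a and b, the sum \alpha_a \alpha_b \sum_{i=0}^{\min(a,b)} \frac{t^{(a-i)(b-i)}}{\alpha_{a-i}\alpha_{b-i}} is symmetric in a and b and is a polynomial in t with integer coefficients. -/

import Mathlib

open scoped BigOperators

/-- The indeterminate `t`, as a rational function over `ℚ`. -/
noncomputable def t : RatFunc ℚ := RatFunc.X

/-- `α m = ∏_{s=1}^m (1 - t^s)`. -/
noncomputable def al (m : ℕ) : RatFunc ℚ := ∏ s ∈ Finset.range m, (1 - t ^ (s + 1))

/-- `S a b = α_a α_b ∑_{i=0}^{min(a,b)} t^{(a-i)(b-i)}/(α_{a-i} α_{b-i})`. -/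
noncomputable def S (a b : ℕ) : RatFunc ℚ :=
  al a * al b *
    ∑ i ∈ Finset.range (min a b + 1), t ^ ((a - i) * (b - i)) / (al (a - i) * al (b - i))

open Polynomial in
lemma t_eq : t = algebraMap (Polynomial ℚ) (RatFunc ℚ) X := (RatFunc.algebraMap_X).symm

open Polynomial in
lemma al_eq (m : ℕ) :
    al m = algebraMap (Polynomial ℚ) (RatFunc ℚ) (∏ s ∈ Finset.range m, (1 - X ^ (s + 1))) := by
  simp [al, t_eq, map_prod, map_sub, map_pow, map_one]

open Polynomial in
lemma factor_ne (s : ℕ) : (1 - (X : Polynomial ℚ) ^ (s + 1)) ≠ 0 := by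
  intro h
  have := congrArg (fun p => Polynomial.coeff p (s + 1)) h
  simp [Polynomial.coeff_one, Nat.succ_ne_zero] at this

lemma al_ne (m : ℕ) : al m ≠ 0 := by
  rw [al_eq]
  rw [map_ne_zero_iff _ (RatFunc.algebraMap_injective ℚ)]
  exact Finset.prod_ne_zero_iff.mpr fun s _ => factor_ne s

lemma al_split {i a : ℕ} (_h : i ≤ a) :
    al a = al (a - i) * ∏ s ∈ Finset.Ico (a - i) a, (1 - t ^ (s + 1)) := by
  rw [al, al, Finset.prod_range_mul_prod_Ico _ (Nat.sub_le a i)]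

lemma S_eq (a b : ℕ) :
    S a b = ∑ i ∈ Finset.range (min a b + 1),
      t ^ ((a - i) * (b - i)) * (∏ s ∈ Finset.Ico (a - i) a, (1 - t ^ (s + 1)))
        * (∏ s ∈ Finset.Ico (b - i) b, (1 - t ^ (s + 1))) := by
  rw [S, Finset.mul_sum]
  apply Finset.sum_congr rfl
  intro i hi
  have hi' : i ≤ min a b := Nat.lt_succ_iff.mp (Finset.mem_range.mp hi)
  have ha : i ≤ a := le_trans hi' (min_le_left a b)
  have hb : i ≤ b := le_trans hi' (min_le_right a b)
  rw [al_split ha, al_split hb]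
  field_simp [al_ne]

/-- `S a b` is symmetric in `a` and `b` and is a polynomial in `t` with integer
coefficients. -/
theorem S_symm_and_polynomial (a b : ℕ) :
    S a b = S b a ∧
      ∃ p : Polynomial ℤ,
        S a b = algebraMap (Polynomial ℚ) (RatFunc ℚ) (p.map (Int.castRingHom ℚ)) := by
  constructor
  · rw [S, S, min_comm, mul_comm (al a) (al b)]
    congr 1
    apply Finset.sum_congr rfl
    intro i _
    rw [mul_comm (a - i) (b - i), mul_comm (al (a - i)) (al (b - i))]
  · refine ⟨∑ i ∈ Finset.range (min a b + 1),
      Polynomial.X ^ ((a - i) * (b - i))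
        * (∏ s ∈ Finset.Ico (a - i) a, (1 - Polynomial.X ^ (s + 1)))
        * (∏ s ∈ Finset.Ico (b - i) b, (1 - Polynomial.X ^ (s + 1))), ?_⟩
    rw [S_eq]
    simp [t_eq, Polynomial.map_sum, Polynomial.map_prod, Polynomial.map_mul, Polynomial.map_sub,
      Polynomial.map_pow, Polynomial.map_one, Polynomial.map_X, map_sum, map_mul, map_prod,
      map_sub, map_pow, map_one]
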